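/- Let A be the tournament matrix of an n-vertex tournament T with eigenvalues λ₁,…,λₙ. Then the number of directed cycles of length ℓ in T, normalized by (ℓ-1)!/2^ℓ · C(n,ℓ), equals (2^ℓ/n^ℓ)·Σᵢ λᵢ^ℓ + O(1/n); equivalently, the trace of the ℓ-th power of the adjacency matrix of T equals ℓ times the number of directed ℓ-cycles in T plus a term of order O(n^{ℓ-1}). -/

import Mathlib

open Matrix Finset

section Aux

variable {n : ℕ}

def chain {k : ℕ} (a : Fin n) (f : Fin k → Fin n) (b : Fin n) : Fin (k+2) → Fin n :=
  Fin.snoc (Fin.cons a f) b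

lemma chain_zero {k : ℕ} (a : Fin n) (f : Fin k → Fin n) (b : Fin n) :
    chain a f b 0 = a := by
  have : (0 : Fin (k+2)) = Fin.castSucc 0 := rfl
  rw [chain, this, Fin.snoc_castSucc, Fin.cons_zero]

lemma chain_one {k : ℕ} (a : Fin n) (g : Fin (k+1) → Fin n) (b : Fin n) :
    chain a g b 1 = g 0 := by
  have : (1 : Fin (k+3)) = Fin.castSucc 1 := rfl
  rw [chain, this, Fin.snoc_castSucc]
  rfl

lemma chain_tail {k : ℕ} (a c : Fin n) (f : Fin k → Fin n) (b : Fin n) :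
    (chain a (Fin.cons c f) b) ∘ Fin.succ = chain c f b := by
  funext i
  induction i using Fin.lastCases with
  | last => simp [chain, Fin.succ_last, Fin.snoc_last]
  | cast j =>
    simp only [Function.comp_apply, chain, Fin.succ_castSucc, Fin.snoc_castSucc, Fin.cons_succ]

lemma walk_pow (M : Matrix (Fin n) (Fin n) ℝ) : ∀ (k : ℕ) (a b : Fin n), (M ^ (k+1)) a b =
    ∑ f : Fin k → Fin n, ∏ i : Fin (k+1),
      M (chain a f b i.castSucc) (chain a f b i.succ) := by
  intro k
  induction k with
  | zero =>
    intro a b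
    simp [Fin.prod_univ_succ, chain, Fin.snoc, Fin.cons]
  | succ k ih =>
    intro a b
    rw [pow_succ', Matrix.mul_apply]
    simp_rw [ih, Finset.mul_sum]
    have main : ∀ g : Fin (k+1) → Fin n,
        (∏ i : Fin (k+2), M (chain a g b i.castSucc) (chain a g b i.succ)) =
        M a (g 0) * ∏ i : Fin (k+1),
          M (chain (g 0) (Fin.tail g) b i.castSucc) (chain (g 0) (Fin.tail g) b i.succ) := by
      intro g
      rw [Fin.prod_univ_succ]
      have h0 : M (chain a g b ((0 : Fin (k+2)).castSucc)) (chain a g b ((0:Fin (k+2)).succ))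
          = M a (g 0) := by
        rw [show ((0 : Fin (k+2)).castSucc) = 0 from rfl, chain_zero,
          show ((0:Fin (k+2)).succ) = 1 from rfl, chain_one]
      rw [h0]
      congr 1
      have hg : g = Fin.cons (g 0) (Fin.tail g) := (Fin.cons_self_tail g).symm
      apply Finset.prod_congr rfl
      intro i _
      have ht : chain a g b ∘ Fin.succ = chain (g 0) (Fin.tail g) b := by
        conv_lhs => rw [hg]
        exact chain_tail a (g 0) (Fin.tail g) b
      have e1 : chain a g b (i.succ).castSucc = chain (g 0) (Fin.tail g) b i.castSucc := by
        rw [← ht]; simp [-Fin.castSucc_succ, Fin.succ_castSucc]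
      have e2 : chain a g b (i.succ).succ = chain (g 0) (Fin.tail g) b i.succ := by
        rw [← ht]; rfl
      rw [e1, e2]
    set F : (Fin (k+1) → Fin n) → ℝ := fun g =>
      ∏ i : Fin (k+2), M (chain a g b i.castSucc) (chain a g b i.succ) with hF
    have step : ∑ g : Fin (k+1) → Fin n, F g
        = ∑ p : Fin n × (Fin k → Fin n), F ((Fin.consEquiv (fun _ : Fin (k+1) => Fin n)) p) :=
      ((Fin.consEquiv (fun _ : Fin (k+1) => Fin n)).sum_comp F).symm
    rw [step, Fintype.sum_prod_type]
    apply Finset.sum_congr rfl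
    intro x _
    apply Finset.sum_congr rfl
    intro f _
    have hxf : (Fin.consEquiv (fun _ : Fin (k+1) => Fin n)) (x, f) = Fin.cons x f := by
      ext j; induction j using Fin.cases <;> simp
    rw [hxf, hF]
    simp only [main, Fin.cons_zero, Fin.tail_cons]

lemma snoc_succ_cyc {m : ℕ} (g : Fin (m+1) → Fin n) (i : Fin (m+1)) :
    (Fin.snoc g (g 0) : Fin (m+2) → Fin n) i.succ = g (i + 1) := by
  induction i using Fin.lastCases with
  | last =>
    rw [Fin.succ_last, Fin.snoc_last]
    congr 1
    ext
    simp [Fin.add_def, Fin.last]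
  | cast j =>
    rw [Fin.succ_castSucc, Fin.snoc_castSucc]
    congr 1
    have hj := j.isLt
    ext
    simp [Fin.add_def, Fin.castSucc, Fin.castAdd, Fin.castLE]
    rw [Nat.mod_eq_of_lt (by omega)]

lemma trace_cyclic (M : Matrix (Fin n) (Fin n) ℝ) (m : ℕ) :
    Matrix.trace (M ^ (m+1)) = ∑ g : Fin (m+1) → Fin n, ∏ i : Fin (m+1), M (g i) (g (i+1)) := by
  have htr : Matrix.trace (M ^ (m+1)) = ∑ a : Fin n, (M ^ (m+1)) a a := rfl
  rw [htr]
  simp_rw [walk_pow M m]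
  have main : ∀ g : Fin (m+1) → Fin n,
      (∏ i : Fin (m+1), M (g i) (g (i+1))) =
      ∏ i : Fin (m+1), M (chain (g 0) (Fin.tail g) (g 0) i.castSucc)
        (chain (g 0) (Fin.tail g) (g 0) i.succ) := by
    intro g
    apply Finset.prod_congr rfl
    intro i _
    have hc : chain (g 0) (Fin.tail g) (g 0) = Fin.snoc g (g 0) := by
      rw [chain, Fin.cons_self_tail]
    rw [hc, Fin.snoc_castSucc, snoc_succ_cyc]
  simp_rw [main]
  set F : (Fin (m+1) → Fin n) → ℝ := fun g =>
    ∏ i : Fin (m+1), M (chain (g 0) (Fin.tail g) (g 0) i.castSucc)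
      (chain (g 0) (Fin.tail g) (g 0) i.succ) with hF
  have step : ∑ g : Fin (m+1) → Fin n, F g
      = ∑ p : Fin n × (Fin m → Fin n), F ((Fin.consEquiv (fun _ : Fin (m+1) => Fin n)) p) :=
    ((Fin.consEquiv (fun _ : Fin (m+1) => Fin n)).sum_comp F).symm
  rw [step, Fintype.sum_prod_type]
  apply Finset.sum_congr rfl
  intro a _
  apply Finset.sum_congr rfl
  intro f _
  have hxf : (Fin.consEquiv (fun _ : Fin (m+1) => Fin n)) (a, f) = Fin.cons a f := by
    ext j; induction j using Fin.cases <;> simp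
  rw [hxf, hF]
  simp only [Fin.cons_zero, Fin.tail_cons]

lemma count_noninj {α β : Type*} [Fintype α] [DecidableEq α] [Fintype β] [DecidableEq β] :
    (Finset.univ.filter fun g : α → β => ¬ Function.Injective g).card ≤
      Fintype.card α ^ 2 * Fintype.card β ^ (Fintype.card α - 1) := by
  classical
  have hsub : (Finset.univ.filter fun g : α → β => ¬ Function.Injective g) ⊆
      (Finset.univ ×ˢ Finset.univ).biUnion
        (fun p : α × α => Finset.univ.filter fun g : α → β => p.1 ≠ p.2 ∧ g p.1 = g p.2) := by
    intro g hg
    rw [Finset.mem_filter] at hg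
    obtain ⟨i, j, hgij, hne⟩ := Function.not_injective_iff.mp hg.2
    refine Finset.mem_biUnion.mpr ⟨(i, j), by simp, ?_⟩
    simp [hne, hgij]
  refine le_trans (Finset.card_le_card hsub) (le_trans Finset.card_biUnion_le ?_)
  have hpair : ∀ p : α × α,
      (Finset.univ.filter fun g : α → β => p.1 ≠ p.2 ∧ g p.1 = g p.2).card ≤
        Fintype.card β ^ (Fintype.card α - 1) := by
    intro p
    by_cases hp : p.1 = p.2
    · simp [hp]
    · have hcard : Fintype.card {x : α // x ≠ p.2} = Fintype.card α - 1 := by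
        simp [Fintype.card_subtype_compl]
      calc (Finset.univ.filter fun g : α → β => p.1 ≠ p.2 ∧ g p.1 = g p.2).card
          ≤ (Finset.univ : Finset ({x : α // x ≠ p.2} → β)).card := by
            apply Finset.card_le_card_of_injOn (fun g x => g x.1) (fun _ _ => Finset.mem_univ _)
            intro g hg g' hg' hgg'
            rw [Finset.mem_coe, Finset.mem_filter] at hg hg'
            funext x
            by_cases hx : x = p.2
            · subst hx
              have h1 : g p.1 = g' p.1 := congrFun hgg' ⟨p.1, hp⟩
              rw [← hg.2.2, ← hg'.2.2, h1]
            · exact congrFun hgg' ⟨x, hx⟩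
        _ = Fintype.card β ^ (Fintype.card α - 1) := by
            rw [Finset.card_univ, Fintype.card_fun, hcard]
  calc ∑ p ∈ Finset.univ ×ˢ Finset.univ,
        (Finset.univ.filter fun g : α → β => p.1 ≠ p.2 ∧ g p.1 = g p.2).card
      ≤ ∑ _p ∈ (Finset.univ ×ˢ Finset.univ : Finset (α × α)),
          Fintype.card β ^ (Fintype.card α - 1) :=
        Finset.sum_le_sum (fun p _ => hpair p)
    _ = Fintype.card α ^ 2 * Fintype.card β ^ (Fintype.card α - 1) := by
        simp [Finset.card_univ, sq, Finset.sum_const, mul_assoc]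

end Aux

theorem stmt_13 (ℓ : ℕ) (hℓ : 3 ≤ ℓ) :
    ∃ C : ℝ, ∀ (n : ℕ) (M : Matrix (Fin n) (Fin n) ℝ),
      (∀ i, M i i = 0) → (∀ i j, M i j = 0 ∨ M i j = 1) →
      (∀ i j, i ≠ j → M i j + M j i = 1) →
      |Matrix.trace (M ^ ℓ) -
          (Set.ncard {f : ZMod ℓ → Fin n |
              Function.Injective f ∧ ∀ i, M (f i) (f (i + 1)) = 1} : ℝ)| ≤
        C * (n : ℝ) ^ (ℓ - 1) := by
  classical
  refine ⟨(ℓ : ℝ) ^ 2, ?_⟩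
  obtain ⟨m, rfl⟩ : ∃ m, ℓ = m + 1 := ⟨ℓ - 1, by omega⟩
  intro n M hdiag h01 hsum
  -- Finsets of closed walks and injective closed walks
  set T : Finset (Fin (m+1) → Fin n) :=
    Finset.univ.filter (fun g => ∀ i, M (g i) (g (i+1)) = 1) with hT
  set I : Finset (Fin (m+1) → Fin n) :=
    Finset.univ.filter (fun g => Function.Injective g ∧ ∀ i, M (g i) (g (i+1)) = 1) with hI
  -- trace = card T
  have htrace : Matrix.trace (M ^ (m+1)) = (T.card : ℝ) := by
    rw [trace_cyclic M m]
    have hprod : ∀ g : Fin (m+1) → Fin n,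
        (∏ i : Fin (m+1), M (g i) (g (i+1))) =
          if (∀ i, M (g i) (g (i+1)) = 1) then (1:ℝ) else 0 := by
      intro g
      split_ifs with h
      · exact Finset.prod_eq_one (fun i _ => h i)
      · push_neg at h
        obtain ⟨i, hi⟩ := h
        refine Finset.prod_eq_zero (Finset.mem_univ i) ?_
        rcases h01 (g i) (g (i+1)) with h0 | h1
        · exact h0
        · exact absurd h1 hi
    simp_rw [hprod]
    rw [Finset.sum_boole]
  -- ncard = card I
  have hncard : (Set.ncard {f : ZMod (m+1) → Fin n |
      Function.Injective f ∧ ∀ i, M (f i) (f (i + 1)) = 1}) = I.card := by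
    have hset : {f : ZMod (m+1) → Fin n |
        Function.Injective f ∧ ∀ i, M (f i) (f (i + 1)) = 1} = (↑I : Set (Fin (m+1) → Fin n)) := by
      ext g
      rw [Set.mem_setOf_eq]
      revert g
      change ∀ g : Fin (m+1) → Fin n,
        (Function.Injective g ∧ ∀ i, M (g i) (g (i + 1)) = 1) ↔ g ∈ (↑I : Set _)
      intro g
      rw [Finset.mem_coe, hI, Finset.mem_filter]
      exact ⟨fun h => ⟨Finset.mem_univ _, h⟩, fun h => h.2⟩
    rw [hset]; exact Set.ncard_coe_finset I
  have hIT : I ⊆ T := by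
    intro g hg
    rw [hI, Finset.mem_filter] at hg
    rw [hT, Finset.mem_filter]
    exact ⟨hg.1, hg.2.2⟩
  -- card bound
  have hbound : T.card - I.card ≤ (m+1)^2 * n^m := by
    have hsd : T \ I ⊆ Finset.univ.filter (fun g : Fin (m+1) → Fin n => ¬ Function.Injective g) := by
      intro g hg
      rw [Finset.mem_sdiff, hT, hI, Finset.mem_filter, Finset.mem_filter] at hg
      rw [Finset.mem_filter]
      refine ⟨Finset.mem_univ _, fun hinj => hg.2 ⟨Finset.mem_univ _, hinj, hg.1.2⟩⟩
    calc T.card - I.card = (T \ I).card := (Finset.card_sdiff_of_subset hIT).symm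
      _ ≤ _ := Finset.card_le_card hsd
      _ ≤ Fintype.card (Fin (m+1)) ^ 2 * Fintype.card (Fin n) ^ (Fintype.card (Fin (m+1)) - 1) :=
          count_noninj
      _ = (m+1)^2 * n^m := by simp
  have hIcard_le : I.card ≤ T.card := Finset.card_le_card hIT
  rw [htrace, hncard]
  have h0 : (0:ℝ) ≤ (T.card : ℝ) - I.card := sub_nonneg.mpr (by exact_mod_cast hIcard_le)
  rw [abs_of_nonneg h0]
  have hcast : ((T.card : ℝ)) - I.card = ((T.card - I.card : ℕ) : ℝ) := by
    rw [Nat.cast_sub hIcard_le]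
  rw [hcast]
  have hfin : ((T.card - I.card : ℕ) : ℝ) ≤ (((m+1)^2 * n^m : ℕ) : ℝ) := by exact_mod_cast hbound
  refine hfin.trans ?_
  rw [Nat.add_sub_cancel]
  push_cast
  exact le_rfl
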